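/- Assume s_c ∈ (s₀, ∞) satisfies ∫₀¹ (s_c² − 2Ω(p))^{-3/2} dp = 1, that R₀ = lim_{s→s₀+} R(s) is finite, and let r ≥ R₀; let s₊(r) be the unique solution of R(s) = r in (s_c, ∞), and let F ∈ ℝ be a fixed constant. Then the function s ↦ κ(s;r) = 2(F − σ(s;r)) − (r − R(s))² is strictly increasing on (s₀, s₊(r)), strictly decreasing on (s₊(r), ∞), and κ(s;r) → −∞ as s → ∞. -/

import Mathlib

open MeasureTheory Set Filter

noncomputable section

/-- `Omeg ω p = ∫₀^p ω(t) dt`, the primitive of the vorticity function. -/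
def Omeg (ω : ℝ → ℝ) (p : ℝ) : ℝ := ∫ t in (0:ℝ)..p, ω t

/-- `s0 ω = sqrt (max_{p ∈ [0,1]} 2 Ω(p))`. -/
def s0 (ω : ℝ → ℝ) : ℝ := Real.sqrt (sSup ((fun p => 2 * Omeg ω p) '' Icc (0:ℝ) 1))

/-- `Hp ω p s = (s² − 2Ω(p))^{-1/2}`. -/
def Hp (ω : ℝ → ℝ) (p s : ℝ) : ℝ := (Real.sqrt (s ^ 2 - 2 * Omeg ω p))⁻¹

/-- `Hfun ω p s = H(p; s) = ∫₀^p (s² − 2Ω(τ))^{-1/2} dτ`. -/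
def Hfun (ω : ℝ → ℝ) (p s : ℝ) : ℝ := ∫ τ in (0:ℝ)..p, Hp ω τ s

/-- `dd ω s = d(s) = H(1; s)`. -/
def dd (ω : ℝ → ℝ) (s : ℝ) : ℝ := Hfun ω 1 s

/-- `RR ω s = R(s) = s²/2 − Ω(1) + d(s)`, the Bernoulli constant of the stream solution. -/
def RR (ω : ℝ → ℝ) (s : ℝ) : ℝ := s ^ 2 / 2 - Omeg ω 1 + dd ω s

/-- `sigmaFun ω s r = σ(s; r)`. -/
def sigmaFun (ω : ℝ → ℝ) (s r : ℝ) : ℝ :=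
  ∫ p in (0:ℝ)..1,
    (1 / (2 * (Hp ω p s) ^ 2) - Hfun ω p s - Omeg ω p + Omeg ω 1 + r) * Hp ω p s

/-- Partial derivative in the first (horizontal) variable `q`. -/
def dq (f : ℝ → ℝ → ℝ) (q p : ℝ) : ℝ := deriv (fun x => f x p) q

/-- Partial derivative in the second (vertical) variable `p`. -/
def dp (f : ℝ → ℝ → ℝ) (q p : ℝ) : ℝ := deriv (fun y => f q y) p

/-- The height system with Bernoulli constant `r` on the strip `S = ℝ × [0,1]`. -/
structure HeightSol (ω : ℝ → ℝ) (r : ℝ) (h : ℝ → ℝ → ℝ) : Prop where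
  smooth : ContDiff ℝ 2 (Function.uncurry h)
  hp_pos : ∀ q : ℝ, ∀ p ∈ Icc (0:ℝ) 1, 0 < dp h q p
  pde : ∀ q : ℝ, ∀ p ∈ Icc (0:ℝ) 1,
    (1 + (dq h q p) ^ 2) / (dp h q p) ^ 2 * dp (dp h) q p
      - 2 * (dq h q p) / (dp h q p) * dp (dq h) q p
      + dq (dq h) q p - ω p * dp h q p = 0
  top : ∀ q : ℝ, (1 + (dq h q 1) ^ 2) / (2 * (dp h q 1) ^ 2) + h q 1 = r
  bot : ∀ q : ℝ, h q 0 = 0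

/-- The flow force of a height function `h`, computed on the vertical line through `q`. -/
def flowForce (ω : ℝ → ℝ) (r : ℝ) (h : ℝ → ℝ → ℝ) (q : ℝ) : ℝ :=
  ∫ p in (0:ℝ)..1,
    ((1 - (dq h q p) ^ 2) / (2 * (dp h q p) ^ 2) - h q p - Omeg ω p + Omeg ω 1 + r) * dp h q p

/-- `wfun ω s h = w^{(s)} = h − H(·; s)`. -/
def wfun (ω : ℝ → ℝ) (s : ℝ) (h : ℝ → ℝ → ℝ) (q p : ℝ) : ℝ := h q p - Hfun ω p s

/-- The flow force flux function `Φ^{(s)}`. -/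
def Phi (ω : ℝ → ℝ) (s : ℝ) (h : ℝ → ℝ → ℝ) (q p : ℝ) : ℝ :=
  ∫ p' in (0:ℝ)..p,
    ((dp (wfun ω s h) q p') ^ 2 / (dp h q p' * (Hp ω p' s) ^ 2)
      - (dq (wfun ω s h) q p') ^ 2 / dp h q p')

/-- `h ∈ C^{2,γ}(S̄)`: `h` is twice continuously differentiable, all partial derivatives of
order ≤ 2 are bounded on the strip, and the second-order derivatives are uniformly
γ-Hölder continuous on the strip. -/
def C2Holder (γ : ℝ) (h : ℝ → ℝ → ℝ) : Prop :=
  ContDiff ℝ 2 (Function.uncurry h) ∧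
  (∀ g ∈ ([h, dq h, dp h, dq (dq h), dp (dq h), dp (dp h)] : List (ℝ → ℝ → ℝ)),
    ∃ M : ℝ, ∀ q : ℝ, ∀ p ∈ Icc (0:ℝ) 1, |g q p| ≤ M) ∧
  (∀ g ∈ ([dq (dq h), dp (dq h), dp (dp h)] : List (ℝ → ℝ → ℝ)),
    ∃ C : ℝ, ∀ q q' : ℝ, ∀ p ∈ Icc (0:ℝ) 1, ∀ p' ∈ Icc (0:ℝ) 1,
      |g q p - g q' p'| ≤ C * Real.sqrt ((q - q') ^ 2 + (p - p') ^ 2) ^ γ)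

end


noncomputable section Aux

open intervalIntegral

/-- `Efun ω s = ∫₀¹ √(s² − 2Ω(p)) dp`. -/
def Efun (ω : ℝ → ℝ) (s : ℝ) : ℝ := ∫ p in (0:ℝ)..1, Real.sqrt (s ^ 2 - 2 * Omeg ω p)

/-- `Jfun ω s = ∫₀¹ (s² − 2Ω(p))^{-3/2} dp`. -/
def Jfun (ω : ℝ → ℝ) (s : ℝ) : ℝ := ∫ p in (0:ℝ)..1, (Hp ω p s) ^ 3

variable {ω : ℝ → ℝ}

lemma omeg_hasDerivAt (hω : Continuous ω) (p : ℝ) : HasDerivAt (Omeg ω) (ω p) p :=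
  intervalIntegral.integral_hasDerivAt_right (hω.intervalIntegrable _ _)
    ⟨univ, univ_mem, hω.aestronglyMeasurable.restrict⟩ hω.continuousAt

lemma omeg_cont (hω : Continuous ω) : Continuous (Omeg ω) :=
  continuous_iff_continuousAt.2 fun p => (omeg_hasDerivAt hω p).continuousAt

lemma omeg_zero : Omeg ω 0 = 0 := intervalIntegral.integral_same

lemma s0_nonneg : 0 ≤ s0 ω := Real.sqrt_nonneg _

lemma two_omeg_le (hω : Continuous ω) {p : ℝ} (hp : p ∈ Icc (0:ℝ) 1) :
    2 * Omeg ω p ≤ s0 ω ^ 2 := by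
  have hbdd : BddAbove ((fun p => 2 * Omeg ω p) '' Icc (0:ℝ) 1) :=
    (isCompact_Icc.image (continuous_const.mul (omeg_cont hω))).bddAbove
  have hle : 2 * Omeg ω p ≤ sSup ((fun p => 2 * Omeg ω p) '' Icc (0:ℝ) 1) :=
    le_csSup hbdd ⟨p, hp, rfl⟩
  have h0 : (0:ℝ) ≤ sSup ((fun p => 2 * Omeg ω p) '' Icc (0:ℝ) 1) := by
    have := le_csSup hbdd ⟨0, by norm_num, rfl⟩
    simpa [omeg_zero] using this
  calc 2 * Omeg ω p ≤ sSup ((fun p => 2 * Omeg ω p) '' Icc (0:ℝ) 1) := hle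
    _ = s0 ω ^ 2 := (Real.sq_sqrt h0).symm

lemma Apos (hω : Continuous ω) {s p : ℝ} (hs : s0 ω < s) (hp : p ∈ Icc (0:ℝ) 1) :
    0 < s ^ 2 - 2 * Omeg ω p := by
  have h1 : 2 * Omeg ω p ≤ s0 ω ^ 2 := two_omeg_le hω hp
  have h2 : s0 ω ^ 2 < s ^ 2 := by
    have := s0_nonneg (ω := ω); nlinarith
  linarith

lemma spos {s : ℝ} (hs : s0 ω < s) : 0 < s := lt_of_le_of_lt s0_nonneg hs

lemma contA (hω : Continuous ω) (s : ℝ) : Continuous fun p => s ^ 2 - 2 * Omeg ω p :=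
  continuous_const.sub (continuous_const.mul (omeg_cont hω))

lemma contAtHp (hω : Continuous ω) {s p : ℝ} (hs : s0 ω < s) (hp : p ∈ Icc (0:ℝ) 1) :
    ContinuousAt (fun τ => Hp ω τ s) p := by
  have h1 : ContinuousAt (fun τ => Real.sqrt (s ^ 2 - 2 * Omeg ω τ)) p :=
    ((contA hω s).sqrt).continuousAt
  have h2 : Real.sqrt (s ^ 2 - 2 * Omeg ω p) ≠ 0 :=
    (Real.sqrt_pos.2 (Apos hω hs hp)).ne'
  exact h1.inv₀ h2

lemma contHp (hω : Continuous ω) {s : ℝ} (hs : s0 ω < s) :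
    ContinuousOn (fun p => Hp ω p s) (Icc (0:ℝ) 1) :=
  fun p hp => (contAtHp hω hs hp).continuousWithinAt

lemma measHp (hω : Continuous ω) (s : ℝ) : Measurable fun p => Hp ω p s :=
  ((contA hω s).sqrt).measurable.inv

lemma intHp (hω : Continuous ω) {s : ℝ} (hs : s0 ω < s) :
    IntervalIntegrable (fun p => Hp ω p s) volume 0 1 := by
  apply ContinuousOn.intervalIntegrable
  rw [uIcc_of_le (by norm_num : (0:ℝ) ≤ 1)]
  exact contHp hω hs

lemma hasDerivAt_Hfun (hω : Continuous ω) {s p : ℝ} (hs : s0 ω < s) (hp : p ∈ Icc (0:ℝ) 1) :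
    HasDerivAt (fun q => Hfun ω q s) (Hp ω p s) p := by
  apply intervalIntegral.integral_hasDerivAt_right
  · apply ContinuousOn.intervalIntegrable
    apply (contHp hω hs).mono
    rw [uIcc_of_le hp.1]
    exact Icc_subset_Icc le_rfl hp.2
  · exact ⟨univ, univ_mem, (measHp hω s).aestronglyMeasurable.restrict⟩
  · exact contAtHp hω hs hp

lemma contHfun (hω : Continuous ω) {s : ℝ} (hs : s0 ω < s) :
    ContinuousOn (fun p => Hfun ω p s) (Icc (0:ℝ) 1) :=
  fun p hp => (hasDerivAt_Hfun hω hs hp).continuousAt.continuousWithinAt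

lemma Hfun_zero (s : ℝ) : Hfun ω 0 s = 0 := intervalIntegral.integral_same

lemma int_H_Hp (hω : Continuous ω) {s : ℝ} (hs : s0 ω < s) :
    ∫ p in (0:ℝ)..1, Hfun ω p s * Hp ω p s = (dd ω s) ^ 2 / 2 := by
  have hderiv : ∀ p ∈ uIcc (0:ℝ) 1,
      HasDerivAt (fun q => Hfun ω q s * Hfun ω q s / 2) (Hfun ω p s * Hp ω p s) p := by
    intro p hp
    rw [uIcc_of_le (by norm_num : (0:ℝ) ≤ 1)] at hp
    have h := hasDerivAt_Hfun hω hs hp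
    have h2 := (h.mul h).div_const 2
    refine h2.congr_deriv (Eq.symm ?_)
    ring
  have hint : IntervalIntegrable (fun p => Hfun ω p s * Hp ω p s) volume 0 1 := by
    apply ContinuousOn.intervalIntegrable
    rw [uIcc_of_le (by norm_num : (0:ℝ) ≤ 1)]
    exact (contHfun hω hs).mul (contHp hω hs)
  rw [intervalIntegral.integral_eq_sub_of_hasDerivAt hderiv hint, Hfun_zero]
  simp [dd]
  ring

lemma sigma_eq (hω : Continuous ω) {s : ℝ} (hs : s0 ω < s) (r : ℝ) :
    sigmaFun ω s r =
      Efun ω s + (r + Omeg ω 1 - s ^ 2 / 2) * dd ω s - (dd ω s) ^ 2 / 2 := by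
  have h1 : sigmaFun ω s r = ∫ p in (0:ℝ)..1,
      (Real.sqrt (s ^ 2 - 2 * Omeg ω p)
        + (r + Omeg ω 1 - s ^ 2 / 2) * Hp ω p s - Hfun ω p s * Hp ω p s) := by
    apply intervalIntegral.integral_congr
    intro p hp
    rw [uIcc_of_le (by norm_num : (0:ℝ) ≤ 1)] at hp
    have hA := Apos hω hs hp
    have hpos : 0 < Real.sqrt (s ^ 2 - 2 * Omeg ω p) := Real.sqrt_pos.2 hA
    have hsq : Real.sqrt (s ^ 2 - 2 * Omeg ω p) ^ 2 = s ^ 2 - 2 * Omeg ω p :=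
      Real.sq_sqrt hA.le
    simp only [Hp]
    field_simp
    nlinarith [hsq, hpos]
  have i1 : IntervalIntegrable (fun p => Real.sqrt (s ^ 2 - 2 * Omeg ω p)) volume 0 1 :=
    ((contA hω s).sqrt).intervalIntegrable 0 1
  have i2 : IntervalIntegrable (fun p => (r + Omeg ω 1 - s ^ 2 / 2) * Hp ω p s) volume 0 1 :=
    (intHp hω hs).const_mul _
  have i3 : IntervalIntegrable (fun p => Hfun ω p s * Hp ω p s) volume 0 1 := by
    apply ContinuousOn.intervalIntegrable
    rw [uIcc_of_le (by norm_num : (0:ℝ) ≤ 1)]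
    exact (contHfun hω hs).mul (contHp hω hs)
  rw [h1, intervalIntegral.integral_sub (i1.add i2) i3,
    intervalIntegral.integral_add i1 i2, intervalIntegral.integral_const_mul,
    int_H_Hp hω hs]
  rfl

lemma kappa_eq (hω : Continuous ω) {s : ℝ} (hs : s0 ω < s) (r F : ℝ) :
    2 * (F - sigmaFun ω s r) - (r - RR ω s) ^ 2 =
      2 * F - 2 * Efun ω s - (r + Omeg ω 1 - s ^ 2 / 2) ^ 2 := by
  rw [sigma_eq hω hs r]
  simp only [RR]
  ring

lemma hasDerivAt_sqrtA (hω : Continuous ω) {x p : ℝ} (hx : 0 < x ^ 2 - 2 * Omeg ω p) :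
    HasDerivAt (fun y => Real.sqrt (y ^ 2 - 2 * Omeg ω p)) (x * Hp ω p x) x := by
  have hinner : HasDerivAt (fun y : ℝ => y ^ 2 - 2 * Omeg ω p) (2 * x) x := by
    simpa using (hasDerivAt_pow 2 x).sub_const (2 * Omeg ω p)
  have hne : x ^ 2 - 2 * Omeg ω p ≠ 0 := hx.ne'
  have h := (Real.hasDerivAt_sqrt hne).comp x hinner
  refine h.congr_deriv (Eq.symm ?_)
  have hpos : 0 < Real.sqrt (x ^ 2 - 2 * Omeg ω p) := Real.sqrt_pos.2 hx
  simp only [Hp]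
  field_simp

lemma ball_bound (hω : Continuous ω) {s : ℝ} (hs : s0 ω < s) {x : ℝ}
    (hx : x ∈ Metric.ball s ((s - s0 ω) / 2)) {p : ℝ} (hp : p ∈ Icc (0:ℝ) 1) :
    ((s + s0 ω) / 2) ^ 2 - s0 ω ^ 2 ≤ x ^ 2 - 2 * Omeg ω p ∧ |x| ≤ s + (s - s0 ω) / 2 := by
  have hd := Real.dist_eq x s ▸ Metric.mem_ball.1 hx
  have h0 : 0 ≤ s0 ω := s0_nonneg
  obtain ⟨ha, hb⟩ := abs_lt.1 hd
  have hx1 : (s + s0 ω) / 2 < x := by linarith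
  have hx2 : x < s + (s - s0 ω) / 2 := by linarith
  have hxpos : 0 < x := by linarith
  constructor
  · have h1 : ((s + s0 ω) / 2) ^ 2 ≤ x ^ 2 := by nlinarith
    have h2 : 2 * Omeg ω p ≤ s0 ω ^ 2 := two_omeg_le hω hp
    linarith
  · rw [abs_of_pos hxpos]; linarith

lemma delta_pos {s : ℝ} (hs : s0 ω < s) : 0 < ((s + s0 ω) / 2) ^ 2 - s0 ω ^ 2 := by
  have h0 : 0 ≤ s0 ω := s0_nonneg
  nlinarith

lemma hasDerivAt_Efun (hω : Continuous ω) {s : ℝ} (hs : s0 ω < s) :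
    HasDerivAt (Efun ω) (s * dd ω s) s := by
  set ε := (s - s0 ω) / 2 with hεdef
  have hε : 0 < ε := by have := s0_nonneg (ω := ω); simp only [hεdef]; linarith
  set δ := ((s + s0 ω) / 2) ^ 2 - s0 ω ^ 2 with hδdef
  have hδ : 0 < δ := delta_pos hs
  have key := intervalIntegral.hasDerivAt_integral_of_dominated_loc_of_deriv_le
    (F := fun x p => Real.sqrt (x ^ 2 - 2 * Omeg ω p))
    (F' := fun x p => x * Hp ω p x)
    (bound := fun _ => (s + ε) * (Real.sqrt δ)⁻¹)
    (μ := volume) (a := 0) (b := 1) (x₀ := s) (Metric.ball_mem_nhds s hε)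
    (Eventually.of_forall fun x => ((contA hω x).sqrt).aestronglyMeasurable.restrict)
    (((contA hω s).sqrt).intervalIntegrable 0 1)
    (((measHp hω s).const_mul s).aestronglyMeasurable.restrict)
    ?_ (intervalIntegrable_const) ?_
  · have : (∫ p in (0:ℝ)..1, s * Hp ω p s) = s * dd ω s := by
      rw [intervalIntegral.integral_const_mul]; rfl
    rw [← this]
    exact key.2
  · apply Eventually.of_forall
    intro p hp x hx
    have hp' : p ∈ Icc (0:ℝ) 1 := by
      rw [uIoc_of_le (by norm_num : (0:ℝ) ≤ 1)] at hp
      exact ⟨hp.1.le, hp.2⟩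
    obtain ⟨hb1, hb2⟩ := ball_bound hω hs hx hp'
    have hδA : Real.sqrt δ ≤ Real.sqrt (x ^ 2 - 2 * Omeg ω p) := Real.sqrt_le_sqrt hb1
    have hδs : 0 < Real.sqrt δ := Real.sqrt_pos.2 hδ
    have hinv : (Real.sqrt (x ^ 2 - 2 * Omeg ω p))⁻¹ ≤ (Real.sqrt δ)⁻¹ :=
      inv_anti₀ hδs hδA
    have hHpnn : 0 ≤ (Real.sqrt (x ^ 2 - 2 * Omeg ω p))⁻¹ :=
      inv_nonneg.2 (Real.sqrt_nonneg _)
    have : ‖x * Hp ω p x‖ = |x| * (Real.sqrt (x ^ 2 - 2 * Omeg ω p))⁻¹ := by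
      rw [Real.norm_eq_abs, abs_mul, Hp, abs_of_nonneg hHpnn]
    rw [this]
    have hsε : (0:ℝ) ≤ s + ε := by
      have h1 : 0 < s := spos hs
      linarith
    exact mul_le_mul hb2 hinv hHpnn hsε
  · apply Eventually.of_forall
    intro p hp x hx
    have hp' : p ∈ Icc (0:ℝ) 1 := by
      rw [uIoc_of_le (by norm_num : (0:ℝ) ≤ 1)] at hp
      exact ⟨hp.1.le, hp.2⟩
    obtain ⟨hb1, _⟩ := ball_bound hω hs hx hp'
    exact hasDerivAt_sqrtA hω (lt_of_lt_of_le hδ hb1)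

lemma hasDerivAt_HpX (hω : Continuous ω) {x p : ℝ} (hx : 0 < x ^ 2 - 2 * Omeg ω p) :
    HasDerivAt (fun y => Hp ω p y) (-(x * (Hp ω p x) ^ 3)) x := by
  have h1 := hasDerivAt_sqrtA hω hx
  have hpos : 0 < Real.sqrt (x ^ 2 - 2 * Omeg ω p) := Real.sqrt_pos.2 hx
  have h2 := h1.inv hpos.ne'
  refine h2.congr_deriv (Eq.symm ?_)
  simp only [Hp]
  rw [eq_div_iff (pow_ne_zero 2 hpos.ne')]
  have hq2 : Real.sqrt (x ^ 2 - 2 * Omeg ω p) ^ 2 = x ^ 2 - 2 * Omeg ω p :=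
    Real.sq_sqrt hx.le
  field_simp

lemma hasDerivAt_dd (hω : Continuous ω) {s : ℝ} (hs : s0 ω < s) :
    HasDerivAt (dd ω) (-(s * Jfun ω s)) s := by
  set ε := (s - s0 ω) / 2 with hεdef
  have hε : 0 < ε := by have := s0_nonneg (ω := ω); simp only [hεdef]; linarith
  set δ := ((s + s0 ω) / 2) ^ 2 - s0 ω ^ 2 with hδdef
  have hδ : 0 < δ := delta_pos hs
  have key := intervalIntegral.hasDerivAt_integral_of_dominated_loc_of_deriv_le
    (F := fun x p => Hp ω p x)
    (F' := fun x p => -(x * (Hp ω p x) ^ 3))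
    (bound := fun _ => (s + ε) * ((Real.sqrt δ)⁻¹) ^ 3)
    (μ := volume) (a := 0) (b := 1) (x₀ := s) (Metric.ball_mem_nhds s hε)
    (Eventually.of_forall fun x => (measHp hω x).aestronglyMeasurable.restrict)
    (intHp hω hs)
    ((((measHp hω s).pow_const 3).const_mul s).neg.aestronglyMeasurable.restrict)
    ?_ (intervalIntegrable_const) ?_
  · have : (∫ p in (0:ℝ)..1, -(s * (Hp ω p s) ^ 3)) = -(s * Jfun ω s) := by
      rw [intervalIntegral.integral_neg, intervalIntegral.integral_const_mul]; rfl
    rw [← this]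
    exact key.2
  · apply Eventually.of_forall
    intro p hp x hx
    have hp' : p ∈ Icc (0:ℝ) 1 := by
      rw [uIoc_of_le (by norm_num : (0:ℝ) ≤ 1)] at hp
      exact ⟨hp.1.le, hp.2⟩
    obtain ⟨hb1, hb2⟩ := ball_bound hω hs hx hp'
    have hδA : Real.sqrt δ ≤ Real.sqrt (x ^ 2 - 2 * Omeg ω p) := Real.sqrt_le_sqrt hb1
    have hδs : 0 < Real.sqrt δ := Real.sqrt_pos.2 hδ
    have hinv : (Real.sqrt (x ^ 2 - 2 * Omeg ω p))⁻¹ ≤ (Real.sqrt δ)⁻¹ := by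
      apply inv_anti₀ hδs hδA
    have hHpnn : 0 ≤ (Real.sqrt (x ^ 2 - 2 * Omeg ω p))⁻¹ :=
      inv_nonneg.2 (Real.sqrt_nonneg _)
    have hcube : (Real.sqrt (x ^ 2 - 2 * Omeg ω p))⁻¹ ^ 3 ≤ ((Real.sqrt δ)⁻¹) ^ 3 :=
      pow_le_pow_left₀ hHpnn hinv 3
    have habs : ‖-(x * (Hp ω p x) ^ 3)‖
        = |x| * ((Real.sqrt (x ^ 2 - 2 * Omeg ω p))⁻¹) ^ 3 := by
      rw [norm_neg, Real.norm_eq_abs, abs_mul, Hp, abs_pow,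
        abs_of_nonneg hHpnn]
    rw [habs]
    have hsε : (0:ℝ) ≤ s + ε := by
      have h1 : 0 < s := spos hs
      linarith
    exact mul_le_mul hb2 hcube (by positivity) hsε
  · apply Eventually.of_forall
    intro p hp x hx
    have hp' : p ∈ Icc (0:ℝ) 1 := by
      rw [uIoc_of_le (by norm_num : (0:ℝ) ≤ 1)] at hp
      exact ⟨hp.1.le, hp.2⟩
    obtain ⟨hb1, _⟩ := ball_bound hω hs hx hp'
    exact hasDerivAt_HpX hω (lt_of_lt_of_le hδ hb1)

lemma hasDerivAt_RR (hω : Continuous ω) {s : ℝ} (hs : s0 ω < s) :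
    HasDerivAt (RR ω) (s * (1 - Jfun ω s)) s := by
  have h1 := hasDerivAt_dd hω hs
  have h2 : HasDerivAt (fun x : ℝ => x ^ 2 / 2 - Omeg ω 1) s s := by
    have := ((hasDerivAt_pow 2 s).div_const 2).sub_const (Omeg ω 1)
    refine this.congr_deriv (Eq.symm ?_)
    ring
  have h3 := h2.add h1
  have : RR ω = fun x => (x ^ 2 / 2 - Omeg ω 1) + dd ω x := by
    funext x; simp [RR]
  rw [this]
  refine h3.congr_deriv (Eq.symm ?_)
  ring

lemma J_lt (hω : Continuous ω) {s t : ℝ} (hs : s0 ω < s) (hst : s < t) :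
    Jfun ω t < Jfun ω s := by
  have ht : s0 ω < t := hs.trans hst
  have key : ∀ p ∈ Icc (0:ℝ) 1, (Hp ω p t) ^ 3 < (Hp ω p s) ^ 3 := by
    intro p hp
    have hAs : 0 < s ^ 2 - 2 * Omeg ω p := Apos hω hs hp
    have hAt : s ^ 2 - 2 * Omeg ω p < t ^ 2 - 2 * Omeg ω p := by
      have h0 : 0 < s := spos hs
      nlinarith
    have hsq : Real.sqrt (s ^ 2 - 2 * Omeg ω p) < Real.sqrt (t ^ 2 - 2 * Omeg ω p) :=
      Real.sqrt_lt_sqrt hAs.le hAt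
    have hsp : 0 < Real.sqrt (s ^ 2 - 2 * Omeg ω p) := Real.sqrt_pos.2 hAs
    have hinv : (Real.sqrt (t ^ 2 - 2 * Omeg ω p))⁻¹
        < (Real.sqrt (s ^ 2 - 2 * Omeg ω p))⁻¹ := by
      apply inv_strictAnti₀ hsp hsq
    simp only [Hp]
    apply pow_lt_pow_left₀ hinv (inv_nonneg.2 (Real.sqrt_nonneg _)) (by norm_num)
  apply intervalIntegral.integral_lt_integral_of_continuousOn_of_le_of_exists_lt zero_lt_one
  · exact (contHp hω ht).pow 3
  · exact (contHp hω hs).pow 3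
  · intro x hx; exact (key x ⟨hx.1.le, hx.2⟩).le
  · exact ⟨0, by norm_num, key 0 (by norm_num)⟩

lemma RR_anti (hω : Continuous ω) {sc : ℝ} (hsc : s0 ω < sc) (hJc : Jfun ω sc = 1) :
    StrictAntiOn (RR ω) (Ioc (s0 ω) sc) := by
  apply strictAntiOn_of_deriv_neg (convex_Ioc _ _)
  · exact fun x hx => (hasDerivAt_RR hω hx.1).continuousAt.continuousWithinAt
  · rw [interior_Ioc]
    intro x hx
    rw [(hasDerivAt_RR hω hx.1).deriv]
    have hJ : 1 < Jfun ω x := hJc ▸ J_lt hω hx.1 hx.2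
    have hx0 : 0 < x := spos hx.1
    exact mul_neg_of_pos_of_neg hx0 (by linarith)

lemma RR_mono (hω : Continuous ω) {sc : ℝ} (hsc : s0 ω < sc) (hJc : Jfun ω sc = 1) :
    StrictMonoOn (RR ω) (Ici sc) := by
  apply strictMonoOn_of_deriv_pos (convex_Ici _)
  · exact fun x hx => (hasDerivAt_RR hω (hsc.trans_le hx)).continuousAt.continuousWithinAt
  · rw [interior_Ici]
    intro x hx
    rw [(hasDerivAt_RR hω (hsc.trans hx)).deriv]
    have hJ : Jfun ω x < 1 := hJc ▸ J_lt hω hsc hx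
    have hx0 : 0 < x := spos (hsc.trans hx)
    exact mul_pos hx0 (by linarith)

lemma Efun_nonneg (ω : ℝ → ℝ) {s : ℝ} : 0 ≤ Efun ω s :=
  intervalIntegral.integral_nonneg zero_le_one fun u _ => Real.sqrt_nonneg _

end Aux

/-- with `s_c` critical, `R₀` finite, `r ≥ R₀`, `s₊(r)` the unique solution of
`R(s) = r` in `(s_c, ∞)` and `F` fixed, the function `s ↦ κ(s;r) = 2(F − σ(s;r)) − (r − R(s))²`
is strictly increasing on `(s₀, s₊(r))`, strictly decreasing on `(s₊(r), ∞)`, and tends to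
`−∞` as `s → ∞`. -/
theorem stmt10 (ω : ℝ → ℝ) (hω : Continuous ω)
    (sc : ℝ) (hsc : sc ∈ Ioi (s0 ω))
    (hI : (∫ p in (0:ℝ)..1, (Hp ω p sc) ^ 3) = 1)
    (R0 : ℝ) (hR0 : Tendsto (RR ω) (nhdsWithin (s0 ω) (Ioi (s0 ω))) (nhds R0))
    (r : ℝ) (hr : R0 ≤ r)
    (sp : ℝ) (hsp : sp ∈ Ioi sc) (hRsp : RR ω sp = r)
    (huniq : ∀ s ∈ Ioi sc, RR ω s = r → s = sp)
    (F : ℝ) :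
    StrictMonoOn (fun s => 2 * (F - sigmaFun ω s r) - (r - RR ω s) ^ 2) (Ioo (s0 ω) sp) ∧
    StrictAntiOn (fun s => 2 * (F - sigmaFun ω s r) - (r - RR ω s) ^ 2) (Ioi sp) ∧
    Tendsto (fun s => 2 * (F - sigmaFun ω s r) - (r - RR ω s) ^ 2) atTop atBot := by
  have hsc' : s0 ω < sc := hsc
  have hJc : Jfun ω sc = 1 := hI
  have hscsp : sc < sp := hsp
  have hs0sp : s0 ω < sp := hsc'.trans hscsp
  have hkd : ∀ s ∈ Ioi (s0 ω),
      HasDerivAt (fun s => 2 * (F - sigmaFun ω s r) - (r - RR ω s) ^ 2)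
        (2 * s * (r - RR ω s)) s := by
    intro s hs
    have hs' : s0 ω < s := hs
    have hg : HasDerivAt (fun x => 2 * F - 2 * Efun ω x - (r + Omeg ω 1 - x ^ 2 / 2) ^ 2)
        (2 * s * (r - RR ω s)) s := by
      have h1 := hasDerivAt_Efun hω hs'
      have hin : HasDerivAt (fun x : ℝ => r + Omeg ω 1 - x ^ 2 / 2) (-s) s := by
        have := ((hasDerivAt_pow 2 s).div_const 2).const_sub (r + Omeg ω 1)
        refine this.congr_deriv (Eq.symm ?_)
        ring
      have h2 := hin.pow 2
      have h3 := ((h1.const_mul 2).const_sub (2 * F)).sub h2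
      refine h3.congr_deriv (Eq.symm ?_)
      simp only [RR, dd]
      push_cast
      ring
    apply hg.congr_of_eventuallyEq
    filter_upwards [isOpen_Ioi.mem_nhds hs'] with x hx
    exact kappa_eq hω hx r F
  have hlt : ∀ s ∈ Ioo (s0 ω) sp, RR ω s < r := by
    intro s hsmem
    rcases le_or_gt s sc with h | h
    · set t := (s0 ω + s) / 2 with htdef
      have ht1 : s0 ω < t := by
        simp only [htdef]; linarith [hsmem.1]
      have ht2 : t < s := by
        simp only [htdef]; linarith [hsmem.1]
      have hts : RR ω s < RR ω t :=
        RR_anti hω hsc' hJc ⟨ht1, ht2.le.trans h⟩ ⟨hsmem.1, h⟩ ht2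
      have htR0 : RR ω t ≤ R0 := by
        apply ge_of_tendsto hR0
        filter_upwards [Ioo_mem_nhdsGT ht1] with u hu
        exact (RR_anti hω hsc' hJc ⟨hu.1, hu.2.le.trans (ht2.le.trans h)⟩
          ⟨ht1, ht2.le.trans h⟩ hu.2).le
      linarith
    · have := RR_mono hω hsc' hJc (le_of_lt h : sc ≤ s) hscsp.le hsmem.2
      rw [hRsp] at this
      exact this
  have hgt : ∀ s ∈ Ioi sp, r < RR ω s := by
    intro s hsmem
    have := RR_mono hω hsc' hJc hscsp.le (hscsp.trans hsmem).le hsmem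
    rw [hRsp] at this
    exact this
  refine ⟨?_, ?_, ?_⟩
  · apply strictMonoOn_of_deriv_pos (convex_Ioo _ _)
    · exact fun x hx => (hkd x hx.1).continuousAt.continuousWithinAt
    · rw [interior_Ioo]
      intro x hx
      rw [(hkd x hx.1).deriv]
      have h1 : 0 < x := spos hx.1
      have h2 : 0 < r - RR ω x := sub_pos.2 (hlt x hx)
      positivity
  · apply strictAntiOn_of_deriv_neg (convex_Ioi _)
    · exact fun x hx => (hkd x (hs0sp.trans hx)).continuousAt.continuousWithinAt
    · rw [interior_Ioi]
      intro x hx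
      rw [(hkd x (hs0sp.trans hx)).deriv]
      have h1 : 0 < x := spos (hs0sp.trans hx)
      have h2 : RR ω x - r > 0 := sub_pos.2 (hgt x hx)
      nlinarith
  · have hT : Tendsto (fun s : ℝ => (r + Omeg ω 1 - s ^ 2 / 2) ^ 2) atTop atTop := by
      have h1 : Tendsto (fun s : ℝ => s ^ 2 / 2 - (r + Omeg ω 1)) atTop atTop := by
        apply tendsto_atTop_add_const_right
        exact (tendsto_pow_atTop (by norm_num : (2:ℕ) ≠ 0)).atTop_div_const (by norm_num)
      have h2 := (tendsto_pow_atTop (by norm_num : (2:ℕ) ≠ 0)).comp h1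
      have heq : (fun s : ℝ => (r + Omeg ω 1 - s ^ 2 / 2) ^ 2)
          = fun s : ℝ => (s ^ 2 / 2 - (r + Omeg ω 1)) ^ 2 := by
        funext s; ring
      rw [heq]
      exact h2
    have hb : Tendsto (fun s : ℝ => 2 * F - (r + Omeg ω 1 - s ^ 2 / 2) ^ 2) atTop atBot := by
      have h3 : Tendsto (fun s : ℝ => -((r + Omeg ω 1 - s ^ 2 / 2) ^ 2)) atTop atBot :=
        tendsto_neg_atTop_atBot.comp hT
      have h4 := tendsto_atBot_add_const_left atTop (2 * F) h3
      simpa [sub_eq_add_neg] using h4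
    apply tendsto_atBot_mono' atTop _ hb
    filter_upwards [eventually_gt_atTop (s0 ω)] with x hx
    rw [kappa_eq hω hx r F]
    have := Efun_nonneg ω (s := x)
    linarith
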